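/- If G is a directed acyclic graph on n nodes without the Sibling Property and with independence number α(G) = r, then the number of edges m of G satisfies m ≥ M(n−r, r−1) + 2(n−r), where M is the edge count of the complement Turán graph. -/

import Mathlib

open Finset

def Indep {n : ℕ} (E : Fin n → Fin n → Prop) (J : Finset (Fin n)) : Prop :=
  ∀ a ∈ J, ∀ b ∈ J, a ≠ b → ¬ (E a b ∨ E b a)

def MaxIndep {n : ℕ} (E : Fin n → Fin n → Prop) (J : Finset (Fin n)) : Prop :=
  Indep E J ∧ ∀ J' : Finset (Fin n), Indep E J' → J'.card ≤ J.card

def SiblingProperty {n : ℕ} (E : Fin n → Fin n → Prop) : Prop :=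
  ∃ (J : Finset (Fin n)) (w i : Fin n), MaxIndep E J ∧ w ∉ J ∧ i ∈ J ∧ E i w

/-- `M n r`: the number of edges of the complement Turán graph `T̄(n,r)`. -/
def M (n r : ℕ) : ℕ :=
  (n % r) * ((n / r + 1) * (n / r) / 2) + (r - n % r) * ((n / r) * (n / r - 1) / 2)

/-- a DAG on `n` nodes without the Sibling Property and with
independence number `r` has at least `M (n−r) (r−1) + 2(n−r)` edges. -/
lemma M_eq (N t : ℕ) :
    M N t = (N % t) * (N / t + 1).choose 2 + (t - N % t) * (N / t).choose 2 := by
  simp [M, Nat.choose_two_right]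

lemma M_eq_zero {N t : ℕ} (h : N ≤ t) : M N t = 0 := by
  rcases Nat.lt_or_ge N t with h' | h'
  · rw [M_eq, Nat.mod_eq_of_lt h', Nat.div_eq_of_lt h']
    simp
  · have hNt : N = t := le_antisymm h h'
    subst hNt
    rcases Nat.eq_zero_or_pos N with h0 | h0
    · subst h0; simp [M]
    · rw [M_eq, Nat.mod_self, Nat.div_self h0]
      simp

lemma choose_two_succ (q : ℕ) : (q + 1).choose 2 = q + q.choose 2 := by
  rw [Nat.choose_succ_succ, Nat.choose_one_right]

lemma M_step {N t s : ℕ} (hs1 : 1 ≤ s) (hst : s ≤ t) (htN : t < N) :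
    M N t ≤ M (N - s) t + (N - s) := by
  have ht : 0 < t := lt_of_lt_of_le hs1 hst
  set q := N / t with hq
  set ρ := N % t with hρ
  have hρt : ρ < t := Nat.mod_lt _ ht
  have hN : t * q + ρ = N := Nat.div_add_mod N t
  have hq1 : 1 ≤ q := (Nat.one_le_div_iff ht).mpr (le_of_lt htN)
  rcases le_or_gt s ρ with hsρ | hsρ
  · -- s ≤ ρ
    have e : N - s = t * q + (ρ - s) := by
      set D := t * q; omega
    have hmod : (N - s) % t = ρ - s := by
      rw [e, Nat.mul_add_mod, Nat.mod_eq_of_lt (by omega)]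
    have hdiv : (N - s) / t = q := by
      rw [e, Nat.mul_add_div ht, Nat.div_eq_of_lt (by omega)]; omega
    obtain ⟨a, ha⟩ : ∃ a, ρ = s + a := ⟨ρ - s, by omega⟩
    obtain ⟨c, hc⟩ : ∃ c, t = ρ + c := ⟨t - ρ, by omega⟩
    have h1 : ρ - s = a := by omega
    have h2 : t - ρ = c := by omega
    have h3 : t - a = s + c := by omega
    rw [M_eq, M_eq, hmod, hdiv, ← hq, ← hρ, choose_two_succ, e, h1, h2, h3, ha]
    have key : s * q ≤ t * q := Nat.mul_le_mul_right q hst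
    linarith [key]
  · -- ρ < s
    obtain ⟨q', hq'⟩ : ∃ q', q = q' + 1 := ⟨q - 1, by omega⟩
    have e : N - s = t * q' + (t + ρ - s) := by
      have : N = t * q' + t + ρ := by rw [← hN, hq']; ring
      omega
    have hmod : (N - s) % t = t + ρ - s := by
      rw [e, Nat.mul_add_mod, Nat.mod_eq_of_lt (by omega)]
    have hdiv : (N - s) / t = q' := by
      rw [e, Nat.mul_add_div ht, Nat.div_eq_of_lt (by omega)]; omega
    obtain ⟨a, ha⟩ : ∃ a, s = ρ + a := ⟨s - ρ, by omega⟩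
    obtain ⟨c, hc⟩ : ∃ c, t = s + c := ⟨t - s, by omega⟩
    have h1 : t + ρ - s = c + ρ := by omega
    have h2 : t - ρ = a + c := by omega
    have h3 : t - (c + ρ) = a := by omega
    have h4 : N - s = t * q' + (c + ρ) := by omega
    rw [M_eq, M_eq, hmod, hdiv, ← hq, ← hρ, hq', h1, h2, h3, h4,
      choose_two_succ (q' + 1), choose_two_succ q']
    have key : (ρ + a) * q' ≤ t * q' := by
      rw [← ha]; exact Nat.mul_le_mul_right q' hst
    linarith [key]

lemma indep_singleton {n : ℕ} (E : Fin n → Fin n → Prop) (v : Fin n) :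
    Indep E {v} := by
  intro a ha b hb hab
  simp only [mem_singleton] at ha hb
  exact absurd (ha.trans hb.symm) hab

lemma turan_lower {n : ℕ} (E : Fin n → Fin n → Prop) [DecidableRel E]
    (N t : ℕ) : ∀ V : Finset (Fin n), V.card = N →
    (∀ J ⊆ V, Indep E J → J.card ≤ t) →
    M N t ≤ ((univ : Finset (Fin n × Fin n)).filter
      (fun p => p.1 ∈ V ∧ p.2 ∈ V ∧ E p.1 p.2)).card := by
  induction N using Nat.strong_induction_on with
  | _ N ih =>
  intro V hV hind
  by_cases hNt : N ≤ t
  · rw [M_eq_zero hNt]; exact Nat.zero_le _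
  push_neg at hNt
  classical
  have hVne : V.Nonempty := card_pos.mp (by omega)
  -- maximal independent subset
  set 𝒮 := V.powerset.filter (fun I => Indep E I) with h𝒮
  have hemp : ∅ ∈ 𝒮 := by
    simp only [h𝒮, mem_filter, mem_powerset]
    exact ⟨empty_subset _, by intro a ha; simp at ha⟩
  obtain ⟨I, hI𝒮, hImax⟩ := 𝒮.exists_max_image Finset.card ⟨∅, hemp⟩
  simp only [h𝒮, mem_filter, mem_powerset] at hI𝒮
  obtain ⟨hIV, hIind⟩ := hI𝒮
  set s := I.card with hs
  have hst : s ≤ t := hind I hIV hIind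
  have hs1 : 1 ≤ s := by
    obtain ⟨v, hv⟩ := hVne
    have : ({v} : Finset (Fin n)) ∈ 𝒮 := by
      simp only [h𝒮, mem_filter, mem_powerset]
      exact ⟨singleton_subset_iff.mpr hv, indep_singleton E v⟩
    simpa using hImax _ this
  -- every vertex outside I has a neighbor in I
  have hnb : ∀ w ∈ V \ I, ∃ i ∈ I, E w i ∨ E i w := by
    intro w hw
    rw [mem_sdiff] at hw
    by_contra h
    push_neg at h
    have hins : Indep E (insert w I) := by
      intro a ha b hb hab
      rw [mem_insert] at ha hb
      rcases ha with ha | ha <;> rcases hb with hb | hb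
      · exact absurd (ha.trans hb.symm) hab
      · subst ha
        intro hor
        rcases hor with h1 | h1
        · exact (h b hb).1 h1
        · exact (h b hb).2 h1
      · subst hb
        intro hor
        rcases hor with h1 | h1
        · exact (h a ha).2 h1
        · exact (h a ha).1 h1
      · exact hIind a ha b hb hab
    have hmem : insert w I ∈ 𝒮 := by
      simp only [h𝒮, mem_filter, mem_powerset]
      exact ⟨insert_subset hw.1 hIV, hins⟩
    have := hImax _ hmem
    rw [card_insert_of_notMem hw.2] at this
    omega
  -- the boundary edge set
  set Sw : Fin n → Finset (Fin n × Fin n) := fun w =>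
    ((I.filter (fun i => E w i)).image (fun i => (w, i))) ∪
    ((I.filter (fun i => E i w)).image (fun i => (i, w))) with hSw
  have hSwmem : ∀ w, ∀ p ∈ Sw w, (p.1 = w ∧ p.2 ∈ I) ∨ (p.2 = w ∧ p.1 ∈ I) := by
    intro w p hp
    simp only [hSw, mem_union, mem_image, mem_filter] at hp
    rcases hp with ⟨i, ⟨hi, _⟩, hpi⟩ | ⟨i, ⟨hi, _⟩, hpi⟩
    · left; rw [← hpi]; exact ⟨rfl, hi⟩
    · right; rw [← hpi]; exact ⟨rfl, hi⟩
  set B := (V \ I).biUnion Sw with hB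
  have hBcard : (V \ I).card ≤ B.card := by
    rw [hB, card_biUnion]
    · apply le_trans _ (le_refl _)
      have : ∀ w ∈ V \ I, 1 ≤ (Sw w).card := by
        intro w hw
        obtain ⟨i, hi, hor⟩ := hnb w hw
        rcases hor with h1 | h1
        · refine card_pos.mpr ⟨(w, i), ?_⟩
          simp only [hSw, mem_union, mem_image, mem_filter]
          exact Or.inl ⟨i, ⟨hi, h1⟩, rfl⟩
        · refine card_pos.mpr ⟨(i, w), ?_⟩
          simp only [hSw, mem_union, mem_image, mem_filter]
          exact Or.inr ⟨i, ⟨hi, h1⟩, rfl⟩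
      calc (V \ I).card = ∑ _w ∈ V \ I, 1 := by simp
        _ ≤ ∑ w ∈ V \ I, (Sw w).card := Finset.sum_le_sum this
    · intro x hx y hy hxy
      simp only [Function.onFun, Finset.disjoint_left]
      intro p hpx hpy
      rw [Finset.mem_coe, mem_sdiff] at hx hy
      rcases hSwmem x p hpx with ⟨h1, h2⟩ | ⟨h1, h2⟩ <;>
        rcases hSwmem y p hpy with ⟨h3, h4⟩ | ⟨h3, h4⟩
      · exact hxy (h1 ▸ h3 ▸ rfl)
      · exact hx.2 (h1 ▸ h4)
      · exact hy.2 (h3 ▸ h2)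
      · exact hxy (h1 ▸ h3 ▸ rfl)
  set A := (univ : Finset (Fin n × Fin n)).filter
      (fun p => p.1 ∈ V \ I ∧ p.2 ∈ V \ I ∧ E p.1 p.2) with hA
  have hAcard : M (N - s) t ≤ A.card := by
    apply ih (N - s) (by omega) (V \ I)
    · rw [card_sdiff_of_subset hIV, hV]
    · intro J hJ hJind
      exact hind J (hJ.trans (sdiff_subset)) hJind
  have hdisj : Disjoint A B := by
    rw [Finset.disjoint_left]
    intro p hpA hpB
    rw [hA, mem_filter] at hpA
    rw [hB, mem_biUnion] at hpB
    obtain ⟨w, hw, hpw⟩ := hpB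
    rw [mem_sdiff] at hw
    rcases hSwmem w p hpw with ⟨_, h2⟩ | ⟨_, h2⟩
    · exact (mem_sdiff.mp hpA.2.2.1).2 h2
    · exact (mem_sdiff.mp hpA.2.1).2 h2
  have hsub : A ∪ B ⊆ (univ : Finset (Fin n × Fin n)).filter
      (fun p => p.1 ∈ V ∧ p.2 ∈ V ∧ E p.1 p.2) := by
    intro p hp
    rw [mem_union] at hp
    rw [mem_filter]
    rcases hp with hp | hp
    · rw [hA, mem_filter] at hp
      exact ⟨mem_univ _, (mem_sdiff.mp hp.2.1).1, (mem_sdiff.mp hp.2.2.1).1, hp.2.2.2⟩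
    · rw [hB, mem_biUnion] at hp
      obtain ⟨w, hw, hpw⟩ := hp
      rw [mem_sdiff] at hw
      simp only [hSw, mem_union, mem_image, mem_filter] at hpw
      rcases hpw with ⟨i, ⟨hi, hEi⟩, hpi⟩ | ⟨i, ⟨hi, hEi⟩, hpi⟩ <;> rw [← hpi]
      · exact ⟨mem_univ _, hw.1, hIV hi, hEi⟩
      · exact ⟨mem_univ _, hIV hi, hw.1, hEi⟩
  have hVI : (V \ I).card = N - s := by rw [card_sdiff_of_subset hIV, hV]
  calc M N t ≤ M (N - s) t + (N - s) := M_step hs1 hst hNt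
    _ ≤ A.card + B.card := by
        rw [hVI] at hBcard
        exact Nat.add_le_add hAcard hBcard
    _ = (A ∪ B).card := (card_union_of_disjoint hdisj).symm
    _ ≤ _ := card_le_card hsub

theorem edge_bound_of_not_sibling {n r : ℕ}
    (E : Fin n → Fin n → Prop) [DecidableRel E]
    (hE : ∀ i j, E i j → i < j)
    (hSP : ¬ SiblingProperty E)
    (hub : ∀ J : Finset (Fin n), Indep E J → J.card ≤ r)
    (hex : ∃ J : Finset (Fin n), Indep E J ∧ J.card = r) :
    M (n - r) (r - 1) + 2 * (n - r) ≤
      ((univ : Finset (Fin n × Fin n)).filter (fun p => E p.1 p.2)).card := by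
  classical
  obtain ⟨J, hJind, hJcard⟩ := hex
  by_cases hr : r = 0
  · subst hr
    have hn : n = 0 := by
      by_contra hn
      have h1 := hub {⟨0, Nat.pos_of_ne_zero hn⟩} (indep_singleton E _)
      simp at h1
    subst hn
    simp [M_eq_zero (Nat.zero_le 0)]
  have hr1 : 1 ≤ r := Nat.one_le_iff_ne_zero.mpr hr
  have hrn : r ≤ n := hJcard ▸ (card_le_card (subset_univ J)).trans_eq (card_univ.trans (Fintype.card_fin n))
  have hmax : MaxIndep E J := ⟨hJind, fun J' h => (hub J' h).trans_eq hJcard.symm⟩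
  have noE : ∀ i ∈ J, ∀ w, w ∉ J → ¬ E i w := by
    intro i hi w hw hE'
    exact hSP ⟨J, w, i, hmax, hw, hi, hE'⟩
  -- every vertex outside J has at least two out-edges into J
  have two : ∀ w, w ∉ J → 2 ≤ (J.filter (fun i => E w i)).card := by
    intro w hw
    by_contra hlt
    push_neg at hlt
    rcases Nat.le_one_iff_eq_zero_or_eq_one.mp (show (J.filter (fun i => E w i)).card ≤ 1 by omega) with h0 | h1
    · -- no neighbor: insert w J independent, contradicting hub
      have hflt : ∀ i ∈ J, ¬ E w i := by
        intro i hi hEi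
        have : i ∈ J.filter (fun i => E w i) := mem_filter.mpr ⟨hi, hEi⟩
        rw [card_eq_zero.mp h0] at this
        simp at this
      have hins : Indep E (insert w J) := by
        intro a ha b hb hab
        rw [mem_insert] at ha hb
        rcases ha with ha | ha <;> rcases hb with hb | hb
        · exact absurd (ha.trans hb.symm) hab
        · rw [ha]
          rintro (h' | h')
          · exact hflt b hb h'
          · exact noE b hb w hw h'
        · rw [hb]
          rintro (h' | h')
          · exact noE a ha w hw h'
          · exact hflt a ha h'
        · exact hJind a ha b hb hab
      have := hub _ hins
      rw [card_insert_of_notMem hw, hJcard] at this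
      omega
    · -- exactly one neighbor i₀: swap to produce SP
      obtain ⟨i₀, hi₀⟩ := card_eq_one.mp h1
      have hi₀mem : i₀ ∈ J.filter (fun i => E w i) := hi₀ ▸ mem_singleton_self i₀
      have hi₀J : i₀ ∈ J := (mem_filter.mp hi₀mem).1
      have hEwi₀ : E w i₀ := (mem_filter.mp hi₀mem).2
      have honly : ∀ b ∈ J, E w b → b = i₀ := by
        intro b hb hEb
        have : b ∈ J.filter (fun i => E w i) := mem_filter.mpr ⟨hb, hEb⟩
        rw [hi₀] at this
        exact mem_singleton.mp this
      set J' := insert w (J.erase i₀) with hJ'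
      have hwne : w ≠ i₀ := fun h => hw (h ▸ hi₀J)
      have hJ'ind : Indep E J' := by
        intro a ha b hb hab
        rw [hJ', mem_insert] at ha hb
        rcases ha with ha | ha <;> rcases hb with hb | hb
        · exact absurd (ha.trans hb.symm) hab
        · rw [ha]
          have hbJ := mem_of_mem_erase hb
          have hbne := ne_of_mem_erase hb
          rintro (h' | h')
          · exact hbne (honly b hbJ h')
          · exact noE b hbJ w hw h'
        · rw [hb]
          have haJ := mem_of_mem_erase ha
          have hane := ne_of_mem_erase ha
          rintro (h' | h')
          · exact noE a haJ w hw h'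
          · exact hane (honly a haJ h')
        · exact hJind a (mem_of_mem_erase ha) b (mem_of_mem_erase hb) hab
      have hwnotin : w ∉ J.erase i₀ := fun h => hw (mem_of_mem_erase h)
      have hJ'card : J'.card = r := by
        rw [hJ', card_insert_of_notMem hwnotin, card_erase_of_mem hi₀J, hJcard]
        omega
      have hJ'max : MaxIndep E J' := ⟨hJ'ind, fun K h => (hub K h).trans_eq hJ'card.symm⟩
      have hi₀notin : i₀ ∉ J' := by
        rw [hJ', mem_insert]
        rintro (h | h)
        · exact hwne h.symm
        · exact notMem_erase i₀ J h
      exact hSP ⟨J', i₀, w, hJ'max, hi₀notin, mem_insert_self w _, hEwi₀⟩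
  set V := (univ : Finset (Fin n)) \ J with hV
  have hVmem : ∀ w, w ∈ V ↔ w ∉ J := by
    intro w; rw [hV, mem_sdiff]; simp
  have hVcard : V.card = n - r := by
    rw [hV, card_sdiff_of_subset (subset_univ J), hJcard, card_univ, Fintype.card_fin]
  -- independence number of the rest is at most r - 1
  have hindV : ∀ I ⊆ V, Indep E I → I.card ≤ r - 1 := by
    intro I hIV hIind
    have hle := hub I hIind
    by_contra hgt
    push_neg at hgt
    have hIr : I.card = r := by omega
    have hImax : MaxIndep E I := ⟨hIind, fun K h => (hub K h).trans_eq hIr.symm⟩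
    obtain ⟨i, hi⟩ := card_pos.mp (show 0 < I.card by omega)
    have hiJ : i ∉ J := (hVmem i).mp (hIV hi)
    obtain ⟨j, hj⟩ := card_pos.mp (show 0 < (J.filter (fun k => E i k)).card by
      have := two i hiJ; omega)
    have hjJ : j ∈ J := (mem_filter.mp hj).1
    have hEij : E i j := (mem_filter.mp hj).2
    have hjI : j ∉ I := by
      intro hjI
      have hne : i ≠ j := fun h => hiJ (h ▸ hjJ)
      exact hIind i hi j hjI hne (Or.inl hEij)
    exact hSP ⟨I, j, i, hImax, hjI, hi, hEij⟩
  -- edge sets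
  set A := (univ : Finset (Fin n × Fin n)).filter
      (fun p => p.1 ∈ V ∧ p.2 ∈ V ∧ E p.1 p.2) with hA
  have hAcard : M (n - r) (r - 1) ≤ A.card :=
    turan_lower E (n - r) (r - 1) V hVcard hindV
  set B := V.biUnion (fun w => (J.filter (fun i => E w i)).image (fun i => (w, i))) with hB
  have hBmem : ∀ p ∈ B, p.1 ∈ V ∧ p.2 ∈ J ∧ E p.1 p.2 := by
    intro p hp
    rw [hB, mem_biUnion] at hp
    obtain ⟨w, hw, hp⟩ := hp
    rw [mem_image] at hp
    obtain ⟨i, hi, hpi⟩ := hp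
    rw [mem_filter] at hi
    rw [← hpi]
    exact ⟨hw, hi.1, hi.2⟩
  have hBcard : 2 * (n - r) ≤ B.card := by
    rw [hB, card_biUnion]
    · have h2 : ∀ w ∈ V, 2 ≤ ((J.filter (fun i => E w i)).image (fun i => (w, i))).card := by
        intro w hw
        rw [card_image_of_injective _ (fun a b h => (Prod.mk.injEq _ _ _ _).mp h |>.2)]
        exact two w ((hVmem w).mp hw)
      calc 2 * (n - r) = ∑ _w ∈ V, 2 := by rw [sum_const, hVcard]; ring
        _ ≤ _ := Finset.sum_le_sum h2
    · intro x hx y hy hxy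
      simp only [Function.onFun, Finset.disjoint_left]
      intro p hpx hpy
      rw [mem_image] at hpx hpy
      obtain ⟨i, _, hpi⟩ := hpx
      obtain ⟨i', _, hpi'⟩ := hpy
      apply hxy
      rw [← hpi] at hpi'
      exact ((Prod.mk.injEq _ _ _ _).mp hpi').1.symm
  have hdisj : Disjoint A B := by
    rw [Finset.disjoint_left]
    intro p hpA hpB
    rw [hA, mem_filter] at hpA
    exact ((hVmem p.2).mp hpA.2.2.1) (hBmem p hpB).2.1
  have hsub : A ∪ B ⊆ (univ : Finset (Fin n × Fin n)).filter (fun p => E p.1 p.2) := by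
    intro p hp
    rw [mem_union] at hp
    rw [mem_filter]
    rcases hp with hp | hp
    · rw [hA, mem_filter] at hp
      exact ⟨mem_univ _, hp.2.2.2⟩
    · exact ⟨mem_univ _, (hBmem p hp).2.2⟩
  calc M (n - r) (r - 1) + 2 * (n - r) ≤ A.card + B.card := Nat.add_le_add hAcard hBcard
    _ = (A ∪ B).card := (card_union_of_disjoint hdisj).symm
    _ ≤ _ := card_le_card hsub
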